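/- On a gauge ball B_R ⊂ ℝ³ with 0 < σ < 1 and m₀ ≤ 0, the function v(ξ) = (m₀/((1-σ⁴)R⁴))·(R⁴ - ‖ξ‖⁴), where ‖(x,y,t)‖⁴ = (x²+y²)²+t², is H-convex in B_R, equals 0 on ∂B_R, equals m₀ on ∂B_{σR}, and satisfies det H(v) = 144(x²+y²)²·(m₀/((1-σ⁴)R⁴))² ≥ 0 and X²v = Y²v = -12(x²+y²)·m₀/((1-σ⁴)R⁴) ≥ 0. -/
import Mathlib


noncomputable section

abbrev H1 := ℝ × ℝ × ℝ

/-- Heisenberg group multiplication: ξ₀∘ξ = (x₀+x, y₀+y, t₀+t+2(x y₀ - y x₀)). -/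
def hmul (a b : H1) : H1 :=
  (a.1 + b.1, a.2.1 + b.2.1, a.2.2 + b.2.2 + 2 * (b.1 * a.2.1 - b.2.1 * a.1))

def hinv (a : H1) : H1 := (-a.1, -a.2.1, -a.2.2)

/-- r = (x²+y²)² + t². -/
def rfun (a : H1) : ℝ := (a.1 ^ 2 + a.2.1 ^ 2) ^ 2 + a.2.2 ^ 2

/-- The Heisenberg gauge ρ(x,y,t) = ((x²+y²)²+t²)^(1/4). -/
def hgauge (a : H1) : ℝ := rfun a ^ ((1 : ℝ) / 4)

/-- d(ξ,ξ₀) = ρ(ξ₀⁻¹ ∘ ξ). -/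
def hdist (a b : H1) : ℝ := hgauge (hmul (hinv b) a)

/-- Heisenberg dilations. -/
def dil (l : ℝ) (a : H1) : H1 := (l * a.1, l * a.2.1, l ^ 2 * a.2.2)

/-- X = ∂_x + 2y ∂_t. -/
def Xop (f : H1 → ℝ) (p : H1) : ℝ :=
  fderiv ℝ f p (1, 0, 0) + 2 * p.2.1 * fderiv ℝ f p (0, 0, 1)

/-- Y = ∂_y - 2x ∂_t. -/
def Yop (f : H1 → ℝ) (p : H1) : ℝ :=
  fderiv ℝ f p (0, 1, 0) - 2 * p.1 * fderiv ℝ f p (0, 0, 1)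

/-- T = ∂_t. -/
def Tder (f : H1 → ℝ) (p : H1) : ℝ := fderiv ℝ f p (0, 0, 1)

/-- (XYu + YXu)/2. -/
def symXY (f : H1 → ℝ) (p : H1) : ℝ := (Xop (Yop f) p + Yop (Xop f) p) / 2

/-- det of the symmetrized horizontal Hessian. -/
def detH (u : H1 → ℝ) (p : H1) : ℝ :=
  Xop (Xop u) p * Yop (Yop u) p - symXY u p ^ 2

/-- Positive semidefiniteness of the symmetrized horizontal Hessian at p. -/
def PSDat (u : H1 → ℝ) (p : H1) : Prop :=
  ∀ h : ℝ × ℝ,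
    0 ≤ Xop (Xop u) p * h.1 ^ 2 + 2 * symXY u p * h.1 * h.2 + Yop (Yop u) p * h.2 ^ 2

/-- The horizontal plane Π_{ξ₀}. -/
def hplane (a : H1) : Set H1 :=
  {p | p.2.2 - a.2.2 - 2 * (p.1 * a.2.1 - p.2.1 * a.1) = 0}

/-- H-convexity of a continuous function on a set, via convexity along horizontal planes. -/
def HConvexSet (S : Set H1) (u : H1 → ℝ) : Prop :=
  ContinuousOn u S ∧
  ∀ a ∈ S, ∀ b ∈ S, b ∈ hplane a → ∀ l ∈ Set.Icc (0 : ℝ) 1,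
    hmul a (dil l (hmul (hinv a) b)) ∈ S →
    u (hmul a (dil l (hmul (hinv a) b))) ≤ u a + l * (u b - u a)


open ContinuousLinearMap in
def lin (a b d : ℝ) : H1 →L[ℝ] ℝ :=
  a • fst ℝ ℝ (ℝ × ℝ) + b • (fst ℝ ℝ ℝ).comp (snd ℝ ℝ (ℝ × ℝ))
    + d • (snd ℝ ℝ ℝ).comp (snd ℝ ℝ (ℝ × ℝ))

@[simp] lemma lin_apply (a b d : ℝ) (w : H1) : lin a b d w = a * w.1 + b * w.2.1 + d * w.2.2 := by
  simp [lin, smul_eq_mul]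

lemma hx (p : H1) : HasFDerivAt (fun q : H1 => q.1) (ContinuousLinearMap.fst ℝ ℝ (ℝ × ℝ)) p := hasFDerivAt_fst
lemma hy (p : H1) : HasFDerivAt (fun q : H1 => q.2.1) ((ContinuousLinearMap.fst ℝ ℝ ℝ).comp (ContinuousLinearMap.snd ℝ ℝ (ℝ × ℝ))) p :=
  hasFDerivAt_fst.comp p hasFDerivAt_snd
lemma ht (p : H1) : HasFDerivAt (fun q : H1 => q.2.2) ((ContinuousLinearMap.snd ℝ ℝ ℝ).comp (ContinuousLinearMap.snd ℝ ℝ (ℝ × ℝ))) p :=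
  hasFDerivAt_snd.comp p hasFDerivAt_snd

lemma hasF_v (c K : ℝ) (p : H1) :
    HasFDerivAt (fun ξ : H1 => c * (K - rfun ξ))
      (lin (-4*c*p.1*(p.1^2+p.2.1^2)) (-4*c*p.2.1*(p.1^2+p.2.1^2)) (-2*c*p.2.2)) p := by
  have hfun : (fun ξ : H1 => c * (K - rfun ξ))
      = fun y : H1 => c * (K - ((y.1 * y.1 + y.2.1 * y.2.1) * (y.1 * y.1 + y.2.1 * y.2.1) + y.2.2 * y.2.2)) := by
    funext w; simp only [rfun]; ring
  rw [hfun]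
  have hs := ((hx p).mul (hx p)).add ((hy p).mul (hy p))
  have h := ((hasFDerivAt_const K p).sub ((hs.mul hs).add ((ht p).mul (ht p)))).const_mul c
  refine h.congr_fderiv (ContinuousLinearMap.ext fun w => ?_)
  simp [lin, smul_eq_mul]
  ring

lemma hasF_g1 (c : ℝ) (p : H1) :
    HasFDerivAt (fun q : H1 => -c * (4*q.1*(q.1^2+q.2.1^2) + 4*q.2.1*q.2.2))
      (lin (-c*(4*(p.1^2+p.2.1^2)+8*p.1^2)) (-c*(8*p.1*p.2.1+4*p.2.2)) (-c*(4*p.2.1))) p := by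
  have hfun : (fun q : H1 => -c * (4*q.1*(q.1^2+q.2.1^2) + 4*q.2.1*q.2.2))
      = fun y : H1 => -c * (y.1 * (y.1*y.1 + y.2.1*y.2.1) * 4 + y.2.1 * y.2.2 * 4) := by
    funext w; ring
  rw [hfun]
  have hs := ((hx p).mul (hx p)).add ((hy p).mul (hy p))
  have h := ((((hx p).mul hs).mul_const 4 |>.add (((hy p).mul (ht p)).mul_const 4)).const_mul (-c))
  refine h.congr_fderiv (ContinuousLinearMap.ext fun w => ?_)
  simp [lin, smul_eq_mul]
  ring

lemma hasF_g2 (c : ℝ) (p : H1) :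
    HasFDerivAt (fun q : H1 => -c * (4*q.2.1*(q.1^2+q.2.1^2) - 4*q.1*q.2.2))
      (lin (-c*(8*p.1*p.2.1-4*p.2.2)) (-c*(4*(p.1^2+p.2.1^2)+8*p.2.1^2)) (c*(4*p.1))) p := by
  have hfun : (fun q : H1 => -c * (4*q.2.1*(q.1^2+q.2.1^2) - 4*q.1*q.2.2))
      = fun y : H1 => -c * (y.2.1 * (y.1*y.1 + y.2.1*y.2.1) * 4 - y.1 * y.2.2 * 4) := by
    funext w; ring
  rw [hfun]
  have hs := ((hx p).mul (hx p)).add ((hy p).mul (hy p))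
  have h := ((((hy p).mul hs).mul_const 4 |>.sub (((hx p).mul (ht p)).mul_const 4)).const_mul (-c))
  refine h.congr_fderiv (ContinuousLinearMap.ext fun w => ?_)
  simp [lin, smul_eq_mul]
  ring

lemma Xop_eq {f : H1 → ℝ} {a b d : ℝ} {p : H1} (hf : HasFDerivAt f (lin a b d) p) :
    Xop f p = a + 2 * p.2.1 * d := by
  simp [Xop, hf.fderiv]

lemma Yop_eq {f : H1 → ℝ} {a b d : ℝ} {p : H1} (hf : HasFDerivAt f (lin a b d) p) :
    Yop f p = b - 2 * p.1 * d := by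
  simp [Yop, hf.fderiv]

lemma gauge_pow {ξ : H1} {s : ℝ} (h : hgauge ξ = s) : rfun ξ = s ^ 4 := by
  have h0 : 0 ≤ rfun ξ := by unfold rfun; positivity
  have h4 : (hgauge ξ) ^ (4 : ℕ) = s ^ 4 := by rw [h]
  rw [hgauge, ← Real.rpow_natCast (rfun ξ ^ ((1:ℝ)/4)) 4, ← Real.rpow_mul h0] at h4
  norm_num at h4
  exact h4

/-- Properties of the barrier v(ξ) = m₀/((1-σ⁴)R⁴)·(R⁴-‖ξ‖⁴). -/
theorem stmt_19 (R σ m₀ : ℝ) (hR : 0 < R) (hσ : 0 < σ) (hσ1 : σ < 1) (hm₀ : m₀ ≤ 0) :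
    let v : H1 → ℝ := fun ξ => m₀ / ((1 - σ ^ 4) * R ^ 4) * (R ^ 4 - rfun ξ)
    (∀ ξ : H1, hgauge ξ = R → v ξ = 0) ∧
    (∀ ξ : H1, hgauge ξ = σ * R → v ξ = m₀) ∧
    (∀ ξ : H1, detH v ξ =
      144 * (ξ.1 ^ 2 + ξ.2.1 ^ 2) ^ 2 * (m₀ / ((1 - σ ^ 4) * R ^ 4)) ^ 2) ∧
    (∀ ξ : H1, 0 ≤ detH v ξ) ∧
    (∀ ξ : H1,
      Xop (Xop v) ξ = -12 * (ξ.1 ^ 2 + ξ.2.1 ^ 2) * (m₀ / ((1 - σ ^ 4) * R ^ 4)) ∧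
      Yop (Yop v) ξ = -12 * (ξ.1 ^ 2 + ξ.2.1 ^ 2) * (m₀ / ((1 - σ ^ 4) * R ^ 4)) ∧
      0 ≤ Xop (Xop v) ξ) ∧
    (∀ ξ : H1, hgauge ξ < R → PSDat v ξ) := by
  intro v
  set c := m₀ / ((1 - σ ^ 4) * R ^ 4) with hc
  have hden : 0 < (1 - σ ^ 4) * R ^ 4 := by
    have h1 : σ ^ 4 < 1 := pow_lt_one₀ hσ.le hσ1 (by norm_num)
    have h2 : 0 < 1 - σ ^ 4 := by linarith
    positivity
  have hcle : c ≤ 0 := by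
    rw [hc]
    exact div_nonpos_iff.mpr (Or.inr ⟨hm₀, hden.le⟩)
  have hv : v = fun ξ : H1 => c * (R ^ 4 - rfun ξ) := rfl
  have hX1 : Xop v = fun q : H1 => -c * (4*q.1*(q.1^2+q.2.1^2) + 4*q.2.1*q.2.2) := by
    funext p; rw [hv, Xop_eq (hasF_v c (R^4) p)]; ring
  have hY1 : Yop v = fun q : H1 => -c * (4*q.2.1*(q.1^2+q.2.1^2) - 4*q.1*q.2.2) := by
    funext p; rw [hv, Yop_eq (hasF_v c (R^4) p)]; ring
  have hXX : ∀ p : H1, Xop (Xop v) p = -12 * (p.1^2 + p.2.1^2) * c := by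
    intro p; rw [hX1, Xop_eq (hasF_g1 c p)]; ring
  have hYY : ∀ p : H1, Yop (Yop v) p = -12 * (p.1^2 + p.2.1^2) * c := by
    intro p; rw [hY1, Yop_eq (hasF_g2 c p)]; ring
  have hsym : ∀ p : H1, symXY v p = 0 := by
    intro p
    have h1 : Xop (Yop v) p = 4 * c * p.2.2 := by
      rw [hY1, Xop_eq (hasF_g2 c p)]; ring
    have h2 : Yop (Xop v) p = -(4 * c * p.2.2) := by
      rw [hX1, Yop_eq (hasF_g1 c p)]; ring
    rw [symXY, h1, h2]; ring
  have hdet : ∀ ξ : H1, detH v ξ = 144 * (ξ.1 ^ 2 + ξ.2.1 ^ 2) ^ 2 * c ^ 2 := by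
    intro ξ; rw [detH, hXX, hYY, hsym]; ring
  have hXXnn : ∀ ξ : H1, 0 ≤ Xop (Xop v) ξ := by
    intro ξ
    rw [hXX]
    have : 0 ≤ (-c) * (12 * (ξ.1^2 + ξ.2.1^2)) :=
      mul_nonneg (neg_nonneg.mpr hcle) (by positivity)
    linarith
  refine ⟨?_, ?_, ?_, ?_, ?_, ?_⟩
  · intro ξ hξ
    simp only [hv]
    rw [gauge_pow hξ]; ring
  · intro ξ hξ
    simp only [hv]
    rw [gauge_pow hξ, hc]
    have h1 : R ^ 4 - (σ * R) ^ 4 = (1 - σ ^ 4) * R ^ 4 := by ring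
    rw [h1]
    exact div_mul_cancel₀ _ hden.ne'
  · exact hdet
  · intro ξ; rw [hdet]; positivity
  · exact fun ξ => ⟨hXX ξ, hYY ξ, hXXnn ξ⟩
  · intro ξ _ h
    rw [hXX, hYY, hsym]
    have hA : 0 ≤ -12 * (ξ.1^2 + ξ.2.1^2) * c := by rw [← hXX ξ]; exact hXXnn ξ
    nlinarith [mul_nonneg hA (sq_nonneg h.1), mul_nonneg hA (sq_nonneg h.2)]
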